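/- Marginals of the multivariate deformed Pólya distribution: let 0 < τ₂ < τ₁ be reals, let m be a nonzero integer, let n, k be naturals with k ≥ 1, let 1 ≤ μ ≤ k, and let β₁, …, β_k, β be reals such that β is not equal to any of 0, 1, …, n−1. Fix naturals y₁, …, y_μ with y₁ + ⋯ + y_μ ≤ n and set x_μ = y₁ + ⋯ + y_μ. Then Σ P_{n,β,m}(y₁,…,y_μ,y_{μ+1},…,y_k) = P'_{n,β,m}(y₁,…,y_μ), where the sum runs over all tuples (y_{μ+1},…,y_k) of naturals with y_{μ+1} + ⋯ + y_k ≤ n − x_μ, P is the k-variate deformed Pólya mass with parameters n, (β₁,…,β_k), β, m, and P' is the μ-variate deformed Pólya mass with parameters n, (β₁,…,β_μ), β, m. -/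

import Mathlib

open Finset

noncomputable def dnum (τ₁ τ₂ x : ℝ) : ℝ := (τ₁ ^ x - τ₂ ^ x) / (τ₁ - τ₂)

noncomputable def dfac (τ₁ τ₂ : ℝ) (r : ℕ) : ℝ :=
  ∏ j ∈ Finset.range r, dnum τ₁ τ₂ ((j : ℝ) + 1)

noncomputable def dfall (τ₁ τ₂ x : ℝ) (r : ℕ) : ℝ :=
  ∏ i ∈ Finset.range r, dnum τ₁ τ₂ (x - (i : ℝ))

noncomputable def dbinom (τ₁ τ₂ x : ℝ) (r : ℕ) : ℝ := dfall τ₁ τ₂ x r / dfac τ₁ τ₂ r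

noncomputable def dmulti (τ₁ τ₂ x : ℝ) {k : ℕ} (r : Fin k → ℕ) : ℝ :=
  dfall τ₁ τ₂ x (∑ j, r j) / ∏ j, dfac τ₁ τ₂ (r j)

/-- The `k`-variate deformed Pólya mass with parameters `n`, `(β₁,…,β_k)`, `β`
and nonzero integer `m`, built from `σ = (τ₁^{−m}, τ₂^{−m})`: for a tuple
`(y₁,…,y_k)` with `y₁+⋯+y_k ≤ n`, writing `y_{k+1} = n − (y₁+⋯+y_k)`,
`β_{k+1} = β − (β₁+⋯+β_k)` and `x_j = y₁+⋯+y_j`, it equals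
`τ₁^{−m Σ_j x_j(β_{j+1}−y_{j+1})} τ₂^{−m Σ_j (n−x_j)(β_j−y_j)}
  M_σ(n; y₁,…,y_k) (Π_{j=1}^{k+1} [β_j]_{y_j,σ}) / [β]_{n,σ}`. -/
noncomputable def polyaMass (τ₁ τ₂ : ℝ) (m : ℤ) (n : ℕ) {k : ℕ}
    (βv : Fin k → ℝ) (β : ℝ) (y : Fin k → ℕ) : ℝ :=
  let σ₁ : ℝ := τ₁ ^ (-m)
  let σ₂ : ℝ := τ₂ ^ (-m)
  let Y : Fin (k + 1) → ℕ := Fin.snoc y (n - ∑ j, y j)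
  let B : Fin (k + 1) → ℝ := Fin.snoc βv (β - ∑ j, βv j)
  let X : Fin k → ℕ := fun j => ∑ i ∈ Finset.Iic j, y i
  τ₁ ^ (-(m : ℝ) * ∑ j : Fin k, (X j : ℝ) * (B j.succ - (Y j.succ : ℝ))) *
    τ₂ ^ (-(m : ℝ) * ∑ j : Fin k, ((n : ℝ) - (X j : ℝ)) * (βv j - (y j : ℝ))) *
    dmulti σ₁ σ₂ (n : ℝ) y *
    (∏ j : Fin (k + 1), dfall σ₁ σ₂ (B j) (Y j)) / dfall σ₁ σ₂ β n

noncomputable def gg (σ₁ σ₂ u v : ℝ) (a b : ℕ) : ℝ :=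
  σ₁ ^ ((a:ℝ) * (v - (b:ℝ))) * σ₂ ^ ((b:ℝ) * (u - (a:ℝ))) * dfall σ₁ σ₂ u a * dfall σ₁ σ₂ v b /
    (dfac σ₁ σ₂ a * dfac σ₁ σ₂ b)


section core
variable {σ₁ σ₂ : ℝ} (h1 : 0 < σ₁) (h2 : 0 < σ₂) (hne : σ₁ ≠ σ₂)

lemma dnum_zero : dnum σ₁ σ₂ 0 = 0 := by simp [dnum]

include h1 h2 hne in
lemma dnum_pos {x : ℝ} (hx : 0 < x) : 0 < dnum σ₁ σ₂ x := by
  rcases lt_or_gt_of_ne hne with h | h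
  · have := Real.rpow_lt_rpow h1.le h hx
    have hd : σ₁ - σ₂ < 0 := by linarith
    exact div_pos_of_neg_of_neg (by linarith) hd
  · have := Real.rpow_lt_rpow h2.le h hx
    exact div_pos (by linarith) (by linarith)

include h1 h2 in
lemma dnum_add (x y : ℝ) : dnum σ₁ σ₂ (x + y) = σ₁ ^ x * dnum σ₁ σ₂ y + σ₂ ^ y * dnum σ₁ σ₂ x := by
  unfold dnum
  rw [Real.rpow_add h1, Real.rpow_add h2]
  ring

include h1 h2 hne in
lemma dfac_pos (r : ℕ) : 0 < dfac σ₁ σ₂ r := by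
  refine Finset.prod_pos fun j _ => dnum_pos h1 h2 hne (by positivity)

lemma dfall_succ (x : ℝ) (r : ℕ) : dfall σ₁ σ₂ x (r + 1) = dfall σ₁ σ₂ x r * dnum σ₁ σ₂ (x - r) := by
  rw [dfall, Finset.prod_range_succ]; rfl

lemma dfac_succ (r : ℕ) : dfac σ₁ σ₂ (r + 1) = dfac σ₁ σ₂ r * dnum σ₁ σ₂ (r + 1) := by
  rw [dfac, Finset.prod_range_succ]; rfl

lemma dfall_add (x : ℝ) (p q : ℕ) :
    dfall σ₁ σ₂ x (p + q) = dfall σ₁ σ₂ x p * dfall σ₁ σ₂ (x - p) q := by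
  rw [dfall, Finset.prod_range_add]
  congr 1
  exact Finset.prod_congr rfl fun i _ => by push_cast; ring_nf

lemma dfall_nat_mul (N a : ℕ) (h : a ≤ N) :
    dfall σ₁ σ₂ (N : ℝ) a * dfac σ₁ σ₂ (N - a) = dfac σ₁ σ₂ N := by
  induction a with
  | zero => simp [dfall]
  | succ a ih =>
    have ha : a ≤ N := by omega
    rw [dfall_succ]
    have h2' : N - a = (N - (a+1)) + 1 := by omega
    have h3 : dfac σ₁ σ₂ (N - a) = dfac σ₁ σ₂ (N - (a+1)) * dnum σ₁ σ₂ ((N:ℝ) - a) := by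
      rw [h2', dfac_succ]
      congr 1
      have : ((N - (a+1) : ℕ) : ℝ) = (N : ℝ) - a - 1 := by
        push_cast [Nat.cast_sub (by omega : a + 1 ≤ N)]; ring
      rw [this]; ring_nf
    calc dfall σ₁ σ₂ (N:ℝ) a * dnum σ₁ σ₂ ((N:ℝ) - a) * dfac σ₁ σ₂ (N - (a+1))
        = dfall σ₁ σ₂ (N:ℝ) a * (dfac σ₁ σ₂ (N - (a+1)) * dnum σ₁ σ₂ ((N:ℝ) - a)) := by ring
      _ = dfall σ₁ σ₂ (N:ℝ) a * dfac σ₁ σ₂ (N - a) := by rw [h3]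
      _ = dfac σ₁ σ₂ N := ih ha

include h1 h2 hne in
lemma keyR (u v : ℝ) (a b : ℕ) :
    gg σ₁ σ₂ u v a b * dnum σ₁ σ₂ (u + v - ((a:ℝ) + b)) =
      σ₂ ^ ((b:ℝ)) * dnum σ₁ σ₂ ((a:ℝ) + 1) * gg σ₁ σ₂ u v (a+1) b +
      σ₁ ^ ((a:ℝ)) * dnum σ₁ σ₂ ((b:ℝ) + 1) * gg σ₁ σ₂ u v a (b+1) := by
  have hsplit : dnum σ₁ σ₂ (u + v - ((a:ℝ) + b)) =
      σ₁ ^ (v - (b:ℝ)) * dnum σ₁ σ₂ (u - a) + σ₂ ^ (u - (a:ℝ)) * dnum σ₁ σ₂ (v - b) := by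
    have := dnum_add h1 h2 (v - (b:ℝ)) (u - (a:ℝ))
    rw [show v - (b:ℝ) + (u - (a:ℝ)) = u + v - ((a:ℝ) + b) by ring] at this
    rw [this]
  rw [hsplit]
  unfold gg
  rw [dfall_succ, dfall_succ, dfac_succ, dfac_succ]
  push_cast
  have e1 : σ₁ ^ (((a:ℝ)+1) * (v - b)) = σ₁ ^ ((a:ℝ) * (v - (b:ℝ))) * σ₁ ^ (v - (b:ℝ)) := by
    rw [← Real.rpow_add h1]; congr 1; ring
  have e2 : σ₂ ^ ((b:ℝ) * (u - ((a:ℝ)+1))) * σ₂ ^ ((b:ℝ)) = σ₂ ^ ((b:ℝ) * (u - (a:ℝ))) := by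
    rw [← Real.rpow_add h2]; congr 1; ring
  have e3 : σ₁ ^ ((a:ℝ) * (v - ((b:ℝ)+1))) * σ₁ ^ ((a:ℝ)) = σ₁ ^ ((a:ℝ) * (v - (b:ℝ))) := by
    rw [← Real.rpow_add h1]; congr 1; ring
  have e4 : σ₂ ^ (((b:ℝ)+1) * (u - (a:ℝ))) = σ₂ ^ ((b:ℝ) * (u - (a:ℝ))) * σ₂ ^ (u - (a:ℝ)) := by
    rw [← Real.rpow_add h2]; congr 1; ring
  rw [e1, e4, ← e2, ← e3]
  have hfa := (dfac_pos h1 h2 hne a).ne'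
  have hfb := (dfac_pos h1 h2 hne b).ne'
  have hna := (dnum_pos h1 h2 hne (by positivity : (0:ℝ) < (a:ℝ)+1)).ne'
  have hnb := (dnum_pos h1 h2 hne (by positivity : (0:ℝ) < (b:ℝ)+1)).ne'
  field_simp
include h1 h2 hne in
lemma vander_g (u v : ℝ) (N : ℕ) :
    ∑ a ∈ range (N+1), gg σ₁ σ₂ u v a (N - a) = dfall σ₁ σ₂ (u+v) N / dfac σ₁ σ₂ N := by
  induction N with
  | zero => simp [gg, dfall, dfac]
  | succ N ih =>
    set F : ℕ → ℝ := fun a => σ₂ ^ (((N+1-a : ℕ)):ℝ) * dnum σ₁ σ₂ ((a:ℝ)) * gg σ₁ σ₂ u v a (N+1-a) with hF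
    set H : ℕ → ℝ := fun a => σ₁ ^ ((a:ℝ)) * dnum σ₁ σ₂ (((N+1-a : ℕ)):ℝ) * gg σ₁ σ₂ u v a (N+1-a) with hH
    have hnum : (0:ℝ) < dnum σ₁ σ₂ ((N:ℝ)+1) := dnum_pos h1 h2 hne (by positivity)
    have mulkey : (∑ a ∈ range (N+2), gg σ₁ σ₂ u v a (N+1-a)) * dnum σ₁ σ₂ ((N:ℝ)+1) =
        (∑ a ∈ range (N+1), gg σ₁ σ₂ u v a (N-a)) * dnum σ₁ σ₂ (u + v - N) := by
      rw [Finset.sum_mul, Finset.sum_mul]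
      have rhs_eq : ∀ a ∈ range (N+1), gg σ₁ σ₂ u v a (N-a) * dnum σ₁ σ₂ (u + v - N) =
          F (a+1) + H a := by
        intro a ha
        rw [mem_range] at ha
        have haN : a ≤ N := by omega
        have hc : ((N - a : ℕ) : ℝ) = (N:ℝ) - a := by
          rw [Nat.cast_sub haN]
        have : dnum σ₁ σ₂ (u + v - N) = dnum σ₁ σ₂ (u + v - ((a:ℝ) + (N-a:ℕ))) := by
          rw [hc]; ring_nf
        rw [this, keyR h1 h2 hne]
        have h1' : N + 1 - (a+1) = N - a := by omega
        have h2' : N - a + 1 = N + 1 - a := by omega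
        have h3' : ((N+1-a : ℕ):ℝ) = ((N-a:ℕ):ℝ) + 1 := by
          rw [Nat.cast_sub haN, Nat.cast_sub (by omega)]; push_cast; ring
        rw [hF, hH]
        simp only [h1', h2', h3']
        push_cast
        ring
      rw [Finset.sum_congr rfl rhs_eq, Finset.sum_add_distrib]
      have hFsum : ∑ a ∈ range (N+1), F (a+1) = ∑ a ∈ range (N+2), F a := by
        rw [Finset.sum_range_succ' F (N+1)]
        have : F 0 = 0 := by simp [hF, dnum_zero]
        rw [this, add_zero]
      have hHsum : ∑ a ∈ range (N+1), H a = ∑ a ∈ range (N+2), H a := by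
        rw [Finset.sum_range_succ H (N+1)]
        have : H (N+1) = 0 := by simp [hH, dnum_zero]
        rw [this, add_zero]
      rw [hFsum, hHsum, ← Finset.sum_add_distrib]
      refine Finset.sum_congr rfl fun a ha => ?_
      rw [mem_range] at ha
      have hc : ((N + 1 - a : ℕ) : ℝ) = (N:ℝ) + 1 - a := by
        rw [Nat.cast_sub (by omega)]; push_cast; ring
      have := dnum_add h1 h2 ((a:ℝ)) (((N+1-a:ℕ)):ℝ)
      rw [hc] at this
      rw [show (a:ℝ) + ((N:ℝ) + 1 - a) = (N:ℝ)+1 by ring] at this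
      rw [hF, hH]
      simp only [hc]
      rw [this]
      ring
    have := mulkey
    rw [ih] at this
    have hstep : dfall σ₁ σ₂ (u+v) N / dfac σ₁ σ₂ N * dnum σ₁ σ₂ (u + v - N) =
        dfall σ₁ σ₂ (u+v) (N+1) / dfac σ₁ σ₂ (N+1) * dnum σ₁ σ₂ ((N:ℝ)+1) := by
      rw [dfall_succ, dfac_succ]
      have := (dfac_pos h1 h2 hne N).ne'
      field_simp
    rw [hstep] at this
    exact mul_right_cancel₀ hnum.ne' this

include h1 h2 hne in
lemma vander (u v : ℝ) (N : ℕ) :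
    ∑ a ∈ range (N+1), σ₁ ^ ((a:ℝ) * (v - ((N:ℝ) - a))) * σ₂ ^ (((N:ℝ) - a) * (u - a)) *
      dfall σ₁ σ₂ (N:ℝ) a * dfall σ₁ σ₂ u a * dfall σ₁ σ₂ v (N-a) / dfac σ₁ σ₂ a =
    dfall σ₁ σ₂ (u+v) N := by
  have hg := vander_g h1 h2 hne u v N
  have hNfac := (dfac_pos h1 h2 hne N).ne'
  calc ∑ a ∈ range (N+1), σ₁ ^ ((a:ℝ) * (v - ((N:ℝ) - a))) * σ₂ ^ (((N:ℝ) - a) * (u - a)) *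
      dfall σ₁ σ₂ (N:ℝ) a * dfall σ₁ σ₂ u a * dfall σ₁ σ₂ v (N-a) / dfac σ₁ σ₂ a
      = ∑ a ∈ range (N+1), gg σ₁ σ₂ u v a (N-a) * dfac σ₁ σ₂ N := by
        refine Finset.sum_congr rfl fun a ha => ?_
        rw [mem_range] at ha
        have haN : a ≤ N := by omega
        have hc : ((N - a : ℕ) : ℝ) = (N:ℝ) - a := by rw [Nat.cast_sub haN]
        rw [gg, hc, ← dfall_nat_mul N a haN]
        have hfa := (dfac_pos h1 h2 hne a).ne'
        have hfb := (dfac_pos h1 h2 hne (N-a)).ne'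
        field_simp
    _ = (∑ a ∈ range (N+1), gg σ₁ σ₂ u v a (N-a)) * dfac σ₁ σ₂ N := by rw [Finset.sum_mul]
    _ = dfall σ₁ σ₂ (u+v) N := by rw [hg]; field_simp
end core

lemma Fin.Iic_castSucc' {n : ℕ} (j : Fin n) :
    Iic (j.castSucc) = (Iic j).map Fin.castSuccEmb := by
  ext i
  simp only [mem_Iic, mem_map, Fin.castSuccEmb, Function.Embedding.coeFn_mk, Fin.le_def,
    Fin.coe_castSucc]
  constructor
  · intro hi
    exact ⟨⟨i, lt_of_le_of_lt hi j.isLt⟩, hi, by ext; simp⟩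
  · rintro ⟨a, ha, rfl⟩
    simpa using ha

lemma Fin.Iic_last' {n : ℕ} : Iic (Fin.last n) = Finset.univ := by
  ext i; simp [Fin.le_last]

lemma rpow_helper {τ : ℝ} (hτ : 0 < τ) (m : ℤ) (e : ℝ) :
    ((τ ^ (-m) : ℝ)) ^ e = τ ^ (-(m:ℝ) * e) := by
  rw [← Real.rpow_intCast τ (-m), ← Real.rpow_mul hτ.le]
  push_cast
  ring_nf

lemma rpow_split {τ : ℝ} (hτ : 0 < τ) (m : ℤ) (e c : ℝ) :
    τ ^ (-(m:ℝ) * (e + c)) = τ ^ (-(m:ℝ) * e) * ((τ ^ (-m) : ℝ)) ^ c := by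
  rw [rpow_helper hτ, ← Real.rpow_add hτ]
  ring_nf


theorem polya_step (τ₁ τ₂ : ℝ) (hτ₂ : 0 < τ₂) (hττ : τ₂ < τ₁) (m : ℤ) (hm : m ≠ 0)
    (n K : ℕ) (hK : 1 ≤ K) (βv : Fin (K+1) → ℝ) (β : ℝ) (y : Fin K → ℕ)
    (hy : ∑ j, y j ≤ n) :
    ∑ a ∈ range (n - ∑ j, y j + 1), polyaMass τ₁ τ₂ m n βv β (Fin.snoc y a) =
      polyaMass τ₁ τ₂ m n (fun j => βv j.castSucc) β y := by
  obtain ⟨K', rfl⟩ : ∃ K', K = K' + 1 := ⟨K - 1, by omega⟩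
  have hτ₁ : 0 < τ₁ := lt_trans hτ₂ hττ
  set σ₁ : ℝ := τ₁ ^ (-m) with hσ₁def
  set σ₂ : ℝ := τ₂ ^ (-m) with hσ₂def
  have h1 : 0 < σ₁ := zpow_pos hτ₁ _
  have h2 : 0 < σ₂ := zpow_pos hτ₂ _
  have hne : σ₁ ≠ σ₂ := by
    intro h
    have hlog : ((-m : ℤ) : ℝ) * Real.log τ₁ = ((-m : ℤ) : ℝ) * Real.log τ₂ := by
      rw [← Real.log_zpow τ₁ (-m), ← Real.log_zpow τ₂ (-m)]
      exact congrArg Real.log h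
    have hm' : ((-m : ℤ) : ℝ) ≠ 0 := by exact_mod_cast neg_ne_zero.mpr hm
    have : Real.log τ₁ = Real.log τ₂ := mul_left_cancel₀ hm' hlog
    have := Real.log_injOn_pos (Set.mem_Ioi.mpr hτ₁) (Set.mem_Ioi.mpr hτ₂) this
    linarith
  set s := ∑ j, y j with hs
  set N := n - s with hN
  have hsn : s ≤ n := hy
  have hNc : ((N : ℕ) : ℝ) = (n : ℝ) - s := by rw [hN, Nat.cast_sub hsn]
  set u := βv (Fin.last (K'+1)) with hu
  set v := β - ∑ j, βv j with hv
  set X : Fin (K'+1) → ℕ := fun j => ∑ i ∈ Iic j, y i with hX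
  set A₁ := ∑ j : Fin (K'+1), (X j : ℝ) *
      ((Fin.snoc (fun j₀ : Fin (K'+1) => βv j₀.castSucc)
        (β - ∑ j₀ : Fin (K'+1), βv j₀.castSucc) : Fin (K'+1+1) → ℝ) j.succ -
       ((Fin.snoc y (n - s) : Fin (K'+1+1) → ℕ) j.succ : ℝ)) with hA₁
  set A₂ := ∑ j : Fin (K'+1), ((n : ℝ) - (X j : ℝ)) * (βv j.castSucc - (y j : ℝ)) with hA₂
  set D := ∏ j : Fin (K'+1), dfac σ₁ σ₂ (y j) with hD
  set Pβ := ∏ j : Fin (K'+1), dfall σ₁ σ₂ (βv j.castSucc) (y j) with hPβ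
  set C := τ₁ ^ (-(m:ℝ) * A₁) * τ₂ ^ (-(m:ℝ) * A₂) *
      (dfall σ₁ σ₂ (n : ℝ) s * Pβ / (D * dfall σ₁ σ₂ β n)) with hC
  have huv : β - ∑ j : Fin (K'+1), βv j.castSucc = u + v := by
    rw [hu, hv, Fin.sum_univ_castSucc (f := βv)]; ring
  -- claim (i)
  have claim1 : ∀ a ∈ range (N + 1), polyaMass τ₁ τ₂ m n βv β (Fin.snoc y a) =
      C * (σ₁ ^ ((a:ℝ) * (v - ((N:ℝ) - a))) * σ₂ ^ (((N:ℝ) - a) * (u - a)) *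
        dfall σ₁ σ₂ (N:ℝ) a * dfall σ₁ σ₂ u a * dfall σ₁ σ₂ v (N-a) / dfac σ₁ σ₂ a) := by
    intro a ha
    rw [mem_range] at ha
    have haN : a ≤ N := by omega
    have hb : n - (s + a) = N - a := by omega
    have hbc : ((N - a : ℕ) : ℝ) = (N:ℝ) - a := by rw [Nat.cast_sub haN]
    have hsac : ((s + a : ℕ) : ℝ) = (s:ℝ) + a := by push_cast; ring
    have hsum' : (∑ i : Fin (K'+1+1), Fin.snoc y a i) = s + a := by rw [Fin.sum_snoc, hs]
    have hIic : ∀ j₀ : Fin (K'+1), (∑ i ∈ Iic j₀.castSucc, Fin.snoc y a i) = X j₀ := by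
      intro j₀
      rw [Fin.Iic_castSucc', Finset.sum_map]
      refine Finset.sum_congr rfl fun i _ => ?_
      simp only [Fin.coe_castSuccEmb, Fin.snoc_castSucc]
    have hlastX : (∑ i ∈ Iic (Fin.last (K'+1)), Fin.snoc y a i) = s + a := by
      rw [Fin.Iic_last']; exact hsum'
    -- difference of the two inner exponent sums
    have hdiff : ∑ j₀ : Fin (K'+1), (X j₀ : ℝ) * (βv j₀.succ - ((Fin.snoc y a : Fin (K'+1+1) → ℕ) j₀.succ : ℝ))
        = A₁ + (s:ℝ) * (((N:ℝ) - a) - v) := by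
      rw [hA₁, Fin.sum_univ_castSucc, Fin.sum_univ_castSucc (n := K')]
      simp only [Fin.succ_castSucc, Fin.snoc_castSucc, Fin.succ_last, Fin.snoc_last]
      have hXlast : (X (Fin.last K') : ℝ) = (s : ℝ) := by
        have hXl : X (Fin.last K') = s := by
          show (∑ i ∈ Iic (Fin.last K'), y i) = s
          rw [Fin.Iic_last', hs]
        rw [hXl]
      rw [hXlast]
      have hcast2 : ((n - s : ℕ) : ℝ) = (N : ℝ) := by rw [← hN]
      rw [hcast2, huv, ← hu]
      ring
    simp only [polyaMass]
    rw [← hσ₁def, ← hσ₂def]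
    rw [hsum', hb]
    -- first exponent
    have hE1 : ∑ x : Fin (K'+1+1), ((∑ i ∈ Iic x, (Fin.snoc y a : Fin (K'+1+1) → ℕ) i : ℕ) : ℝ) *
        ((Fin.snoc βv (β - ∑ j : Fin (K'+1+1), βv j) : Fin (K'+1+1+1) → ℝ) x.succ -
         ((Fin.snoc (Fin.snoc y a) (N - a) : Fin (K'+1+1+1) → ℕ) x.succ : ℝ))
        = A₁ + (a:ℝ) * (v - ((N:ℝ) - a)) := by
      rw [Fin.sum_univ_castSucc]
      simp only [Fin.succ_castSucc, Fin.snoc_castSucc, Fin.succ_last, Fin.snoc_last]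
      have hterm : ∀ i : Fin (K'+1), ((∑ i' ∈ Iic i.castSucc, (Fin.snoc y a : Fin (K'+1+1) → ℕ) i' : ℕ) : ℝ) *
          (βv i.succ - ((Fin.snoc y a : Fin (K'+1+1) → ℕ) i.succ : ℝ))
          = (X i : ℝ) * (βv i.succ - ((Fin.snoc y a : Fin (K'+1+1) → ℕ) i.succ : ℝ)) := by
        intro i
        rw [hIic i]
      rw [Finset.sum_congr rfl fun i _ => hterm i, hdiff, hlastX, hsac, hbc, ← hv]
      ring
    rw [hE1]
    -- second exponent
    have hE2 : ∑ x : Fin (K'+1+1), ((n:ℝ) - ((∑ i ∈ Iic x, (Fin.snoc y a : Fin (K'+1+1) → ℕ) i : ℕ) : ℝ)) *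
        (βv x - ((Fin.snoc y a : Fin (K'+1+1) → ℕ) x : ℝ))
        = A₂ + ((N:ℝ) - a) * (u - a) := by
      rw [Fin.sum_univ_castSucc]
      simp only [Fin.snoc_castSucc, Fin.snoc_last]
      have hterm : ∀ i : Fin (K'+1), ((n:ℝ) - ((∑ i' ∈ Iic i.castSucc, (Fin.snoc y a : Fin (K'+1+1) → ℕ) i' : ℕ) : ℝ)) *
          (βv i.castSucc - (y i : ℝ))
          = ((n:ℝ) - (X i : ℝ)) * (βv i.castSucc - (y i : ℝ)) := by
        intro i
        rw [hIic i]
      rw [Finset.sum_congr rfl fun i _ => hterm i, ← hA₂, hlastX, hsac, ← hu]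
      have : ((n:ℝ) - ((s:ℝ) + a)) = ((N:ℝ) - a) := by rw [hNc]; ring
      rw [this]
    rw [hE2]
    -- multinomial
    have hdm : dmulti σ₁ σ₂ (n:ℝ) (Fin.snoc y a) =
        dfall σ₁ σ₂ (n:ℝ) s * dfall σ₁ σ₂ ((N:ℕ):ℝ) a / (D * dfac σ₁ σ₂ a) := by
      rw [dmulti, hsum', dfall_add, hNc]
      congr 1
      rw [Fin.prod_univ_castSucc]
      simp only [Fin.snoc_castSucc, Fin.snoc_last]
      rfl
    rw [hdm]
    -- falling factorial product
    have hprod : (∏ x : Fin (K'+1+1+1), dfall σ₁ σ₂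
        ((Fin.snoc βv (β - ∑ j : Fin (K'+1+1), βv j) : Fin (K'+1+1+1) → ℝ) x)
        ((Fin.snoc (Fin.snoc y a) (N - a) : Fin (K'+1+1+1) → ℕ) x))
        = Pβ * dfall σ₁ σ₂ u a * dfall σ₁ σ₂ v (N - a) := by
      rw [Fin.prod_univ_castSucc]
      simp only [Fin.snoc_castSucc, Fin.snoc_last]
      rw [← hv, Fin.prod_univ_castSucc]
      simp only [Fin.snoc_castSucc, Fin.snoc_last]
      rfl
    rw [hprod]
    rw [rpow_split hτ₁ m A₁ ((a:ℝ) * (v - ((N:ℝ) - a))),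
        rpow_split hτ₂ m A₂ (((N:ℝ) - a) * (u - (a:ℝ)))]
    rw [← hσ₁def, ← hσ₂def, hC]
    ring
  -- claim (ii)
  have claim2 : polyaMass τ₁ τ₂ m n (fun j => βv j.castSucc) β y =
      C * dfall σ₁ σ₂ (u + v) N := by
    simp only [polyaMass]
    rw [← hσ₁def, ← hσ₂def]
    have hmulti : dmulti σ₁ σ₂ (n:ℝ) y = dfall σ₁ σ₂ (n : ℝ) s / D := rfl
    rw [hmulti]
    have hprod : (∏ x : Fin (K'+1+1), dfall σ₁ σ₂
        ((Fin.snoc (fun j => βv j.castSucc) (β - ∑ j : Fin (K'+1), βv j.castSucc) : Fin (K'+1+1) → ℝ) x)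
        ((Fin.snoc y (n - ∑ i : Fin (K'+1), y i) : Fin (K'+1+1) → ℕ) x)) = Pβ * dfall σ₁ σ₂ (u+v) N := by
      rw [Fin.prod_univ_castSucc]
      simp only [Fin.snoc_castSucc, Fin.snoc_last]
      rw [huv]
    rw [hprod]
    show τ₁ ^ (-(m:ℝ) * A₁) * τ₂ ^ (-(m:ℝ) * A₂) * (dfall σ₁ σ₂ (↑n) s / D) *
        (Pβ * dfall σ₁ σ₂ (u+v) N) / dfall σ₁ σ₂ β n = C * dfall σ₁ σ₂ (u + v) N
    rw [hC]
    ring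
  rw [Finset.sum_congr rfl claim1, ← Finset.mul_sum, vander h1 h2 hne u v N, claim2]

lemma sum_filter_piFinset_cons (d n M : ℕ) (F : (Fin (d+1) → ℕ) → ℝ) :
    ∑ t ∈ (Fintype.piFinset fun _ : Fin (d+1) => range (n+1)).filter (fun t => ∑ j, t j ≤ M), F t
    = ∑ a ∈ range (n+1), ∑ t' ∈ (Fintype.piFinset fun _ : Fin d => range (n+1)).filter
        (fun t' => a + ∑ j, t' j ≤ M), F (Fin.cons a t') := by
  rw [Finset.sum_sigma']
  refine Finset.sum_nbij' (i := fun t => ⟨t 0, Fin.tail t⟩)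
    (j := fun p => Fin.cons p.1 p.2) ?_ ?_ ?_ ?_ ?_
  · intro t ht
    rw [Finset.mem_filter, Fintype.mem_piFinset] at ht
    refine Finset.mem_sigma.mpr ⟨ht.1 0, ?_⟩
    rw [Finset.mem_filter, Fintype.mem_piFinset]
    dsimp only
    refine ⟨fun i => ht.1 i.succ, ?_⟩
    have h0 : t 0 + ∑ j, Fin.tail t j = ∑ j, t j := by
      rw [Fin.sum_univ_succ]; rfl
    have := ht.2
    omega
  · intro p hp
    rw [Finset.mem_sigma] at hp
    obtain ⟨hp1, hp2⟩ := hp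
    rw [Finset.mem_filter, Fintype.mem_piFinset] at hp2
    rw [Finset.mem_filter, Fintype.mem_piFinset]
    constructor
    · intro i
      refine Fin.cases ?_ ?_ i
      · rw [Fin.cons_zero]; exact hp1
      · intro i'; rw [Fin.cons_succ]; exact hp2.1 i'
    · rw [Fin.sum_cons]
      exact hp2.2
  · intro t _
    dsimp only
    exact Fin.cons_self_tail t
  · intro p _
    ext
    · rw [Fin.cons_zero]
    · simp [Fin.tail_cons]
  · intro t _
    dsimp only
    rw [Fin.cons_self_tail]

/-- Marginals of the multivariate deformed Pólya distribution: summing the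
`k`-variate mass over the last `k − μ` coordinates (over all tuples with
`y_{μ+1}+⋯+y_k ≤ n − x_μ`, where `x_μ = y₁+⋯+y_μ`) yields the `μ`-variate
deformed Pólya mass with parameters `n`, `(β₁,…,β_μ)`, `β`, `m`. -/
theorem deformed_polya_marginal
    (τ₁ τ₂ : ℝ) (hτ₂ : 0 < τ₂) (hττ : τ₂ < τ₁) (m : ℤ) (hm : m ≠ 0)
    (n k μ : ℕ) (hk : 1 ≤ k) (hμ : 1 ≤ μ) (hμk : μ ≤ k)
    (βv : Fin k → ℝ) (β : ℝ) (hβ : ∀ i : ℕ, i < n → β ≠ i)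
    (y : Fin μ → ℕ) (hy : ∑ j, y j ≤ n) :
    ∑ t ∈ (Fintype.piFinset fun _ : Fin (k - μ) => Finset.range (n + 1)).filter
        (fun t => ∑ j, t j ≤ n - ∑ j, y j),
      polyaMass τ₁ τ₂ m n βv β
        (fun j : Fin k =>
          if h : (j : ℕ) < μ then y ⟨(j : ℕ), h⟩
          else t ⟨(j : ℕ) - μ, by have := j.isLt; omega⟩) =
      polyaMass τ₁ τ₂ m n (fun j : Fin μ => βv (Fin.castLE hμk j)) β y := by
  suffices H : ∀ d (μ' : ℕ) (hμ' : 1 ≤ μ') (hμk' : μ' ≤ k) (hd : k - μ' = d)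
      (y' : Fin μ' → ℕ) (hy' : ∑ j, y' j ≤ n),
      (∑ t ∈ (Fintype.piFinset fun _ : Fin d => Finset.range (n + 1)).filter
          (fun t => ∑ j, t j ≤ n - ∑ j, y' j),
        polyaMass τ₁ τ₂ m n βv β
          (fun j : Fin k =>
            if h : (j : ℕ) < μ' then y' ⟨(j : ℕ), h⟩
            else t ⟨(j : ℕ) - μ', by have := j.isLt; omega⟩)) =
        polyaMass τ₁ τ₂ m n (fun j : Fin μ' => βv (Fin.castLE hμk' j)) β y' by
    exact H (k - μ) μ hμ hμk rfl y hy
  intro d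
  induction d with
  | zero =>
    intro μ' hμ' hμk' hd y' hy'
    have hμeq : μ' = k := by omega
    subst hμeq
    have hsingle : (Fintype.piFinset fun _ : Fin 0 => Finset.range (n + 1)).filter
        (fun t => ∑ j, t j ≤ n - ∑ j, y' j) = {![]} := by
      refine Finset.eq_singleton_iff_unique_mem.mpr ⟨?_, fun t _ => Subsingleton.elim t ![]⟩
      rw [Finset.mem_filter, Fintype.mem_piFinset]
      exact ⟨fun i => i.elim0, by simp⟩
    rw [hsingle, Finset.sum_singleton]
    have hg : (fun j : Fin μ' => βv (Fin.castLE hμk' j)) = βv := by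
      funext j
      exact congrArg βv (Fin.ext rfl)
    rw [hg]
    congr 1
    funext j
    rw [dif_pos j.isLt]
  | succ d ih =>
    intro μ' hμ' hμk' hd y' hy'
    have hμk1 : μ' + 1 ≤ k := by omega
    have hd' : k - (μ' + 1) = d := by omega
    have hsn : ∑ j, y' j ≤ n := hy'
    rw [sum_filter_piFinset_cons d n (n - ∑ j, y' j)]
    have htuple : ∀ (a : ℕ) (t' : Fin d → ℕ),
        (fun j : Fin k =>
          if h : (j : ℕ) < μ' then y' ⟨(j : ℕ), h⟩
          else (Fin.cons a t' : Fin (d+1) → ℕ) ⟨(j : ℕ) - μ', by have := j.isLt; omega⟩) =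
        (fun j : Fin k =>
          if h : (j : ℕ) < μ' + 1 then (Fin.snoc y' a : Fin (μ'+1) → ℕ) ⟨(j : ℕ), h⟩
          else t' ⟨(j : ℕ) - (μ' + 1), by have := j.isLt; omega⟩) := by
      intro a t'
      funext j
      by_cases h1 : (j : ℕ) < μ'
      · rw [dif_pos h1, dif_pos (by omega : (j : ℕ) < μ' + 1)]
        simp [Fin.snoc, h1]
      · rw [dif_neg h1]
        by_cases h2 : (j : ℕ) < μ' + 1
        · rw [dif_pos h2]
          have hz : (⟨(j : ℕ) - μ', by have := j.isLt; omega⟩ : Fin (d+1)) = 0 :=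
            Fin.ext (by simp; omega)
          rw [hz, Fin.cons_zero]
          simp [Fin.snoc, h1]
        · rw [dif_neg h2]
          have hsucc : (⟨(j : ℕ) - μ', by have := j.isLt; omega⟩ : Fin (d+1)) =
              Fin.succ ⟨(j : ℕ) - (μ' + 1), by have := j.isLt; omega⟩ :=
            Fin.ext (by simp; omega)
          rw [hsucc, Fin.cons_succ]
    have step1 : ∀ a ∈ range (n + 1),
        (∑ t' ∈ (Fintype.piFinset fun _ : Fin d => range (n+1)).filter
            (fun t' => a + ∑ j, t' j ≤ n - ∑ j, y' j),
          polyaMass τ₁ τ₂ m n βv β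
            (fun j : Fin k =>
              if h : (j : ℕ) < μ' then y' ⟨(j : ℕ), h⟩
              else (Fin.cons a t' : Fin (d+1) → ℕ) ⟨(j : ℕ) - μ', by have := j.isLt; omega⟩)) =
        (if a ≤ n - ∑ j, y' j then
          polyaMass τ₁ τ₂ m n (fun j : Fin (μ'+1) => βv (Fin.castLE hμk1 j)) β (Fin.snoc y' a)
        else 0) := by
      intro a ha
      rw [mem_range] at ha
      by_cases haN : a ≤ n - ∑ j, y' j
      · rw [if_pos haN]
        have hset : (Fintype.piFinset fun _ : Fin d => range (n+1)).filter
            (fun t' => a + ∑ j, t' j ≤ n - ∑ j, y' j) =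
            (Fintype.piFinset fun _ : Fin d => range (n+1)).filter
            (fun t' => ∑ j, t' j ≤ n - ∑ j, (Fin.snoc y' a : Fin (μ'+1) → ℕ) j) := by
          apply Finset.filter_congr
          intro t' _
          rw [Fin.sum_snoc]
          constructor <;> (intro; omega)
        rw [hset]
        rw [Finset.sum_congr rfl (fun t' _ => congrArg (polyaMass τ₁ τ₂ m n βv β) (htuple a t'))]
        exact ih (μ' + 1) (by omega) hμk1 hd' (Fin.snoc y' a) (by rw [Fin.sum_snoc]; omega)
      · rw [if_neg haN]
        rw [Finset.filter_false_of_mem (fun t' _ => by omega : ∀ t' ∈ Fintype.piFinset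
            fun _ : Fin d => range (n+1), ¬ (a + ∑ j, t' j ≤ n - ∑ j, y' j))]
        exact Finset.sum_empty
    rw [Finset.sum_congr rfl step1]
    have hfilter : (range (n+1)).filter (fun a => a ≤ n - ∑ j, y' j) = range (n - ∑ j, y' j + 1) := by
      ext a
      simp only [mem_filter, mem_range]
      omega
    rw [← Finset.sum_filter, hfilter]
    have hps := polya_step τ₁ τ₂ hτ₂ hττ m hm n μ' hμ'
      (fun j : Fin (μ'+1) => βv (Fin.castLE hμk1 j)) β y' hy'
    rw [hps]
    exact congrArg (fun f => polyaMass τ₁ τ₂ m n f β y')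
      (funext fun j => congrArg βv (Fin.ext rfl))
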